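/- The constant C_{MN} = (1/T!)·Π_{i=1}^N (M−i)!/(N−i)! with T = N(M−N) satisfies 0 < C_{MN} ≤ 1 for all integers M > N ≥ 1. -/

import Mathlib

open Nat

lemma CMN_aux1 (a c : ℕ) (h : a ≤ c) : ∀ b : ℕ, (a + b)! * c ! ≤ (c + b)! * a ! := by
  intro b
  induction b with
  | zero =>
      simp [Nat.mul_comm]
  | succ b ih =>
      have h1 : (a + (b + 1))! * c ! = (a + b + 1) * ((a + b)! * c !) := by
        rw [show a + (b + 1) = (a + b) + 1 from rfl, Nat.factorial_succ]; ring
      have h2 : (c + (b + 1))! * a ! = (c + b + 1) * ((c + b)! * a !) := by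
        rw [show c + (b + 1) = (c + b) + 1 from rfl, Nat.factorial_succ]; ring
      rw [h1, h2]
      exact Nat.mul_le_mul (by omega) ih

lemma CMN_key : ∀ N : ℕ, 1 ≤ N → ∀ M : ℕ, N < M →
    ∏ i ∈ Finset.range N, (M - (i + 1))! ≤
      (N * (M - N))! * ∏ i ∈ Finset.range N, (N - (i + 1))! := by
  intro N
  induction N with
  | zero => omega
  | succ N ih =>
      intro _ M hM
      rcases Nat.eq_or_lt_of_le (Nat.succ_le_succ (Nat.zero_le N)) with h1 | h1
      · -- N = 0 case
        have hN0 : N = 0 := by omega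
        subst hN0
        simp [Nat.factorial]
      · -- N ≥ 1
        have hN1 : 1 ≤ N := by omega
        have hM1 : N < M - 1 := by omega
        set b := M - 1 - N with hb
        have hb1 : 1 ≤ b := by omega
        have hM2 : M - 1 = N + b := by omega
        have e1 : ∏ i ∈ Finset.range (N + 1), (M - (i + 1))! =
            (∏ i ∈ Finset.range N, ((M - 1) - (i + 1))!) * (M - 1)! := by
          rw [Finset.prod_range_succ']
          congr 1
          · apply Finset.prod_congr rfl
            intro i _
            congr 1
            omega
        have e2 : ∏ i ∈ Finset.range (N + 1), ((N + 1) - (i + 1))! =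
            (∏ i ∈ Finset.range N, (N - (i + 1))!) * N ! := by
          rw [Finset.prod_range_succ']
          congr 1
          · apply Finset.prod_congr rfl
            intro i _
            congr 1
            omega
        rw [e1, e2]
        have step1 : (∏ i ∈ Finset.range N, ((M - 1) - (i + 1))!) * (M - 1)! ≤
            ((N * ((M - 1) - N))! * ∏ i ∈ Finset.range N, (N - (i + 1))!) * (M - 1)! :=
          Nat.mul_le_mul_right _ (ih hN1 (M - 1) hM1)
        refine step1.trans ?_
        have hNb : N ≤ N * b := Nat.le_mul_of_pos_right N hb1
        have key : (N * b)! * (N + b)! ≤ ((N + 1) * (M - (N + 1)))! * N ! := by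
          have : (N + 1) * (M - (N + 1)) = N * b + b := by
            have : M - (N + 1) = b := by omega
            rw [this]; ring
          rw [this, mul_comm ((N * b)!)]
          exact CMN_aux1 N (N * b) hNb b
        have hrw : (M - 1) - N = b := by omega
        rw [hrw, hM2]
        calc (N * b)! * (∏ i ∈ Finset.range N, (N - (i + 1))!) * (N + b)!
            = ((N * b)! * (N + b)!) * ∏ i ∈ Finset.range N, (N - (i + 1))! := by ring
          _ ≤ (((N + 1) * (M - (N + 1)))! * N !) * ∏ i ∈ Finset.range N, (N - (i + 1))! :=
              Nat.mul_le_mul_right _ key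
          _ = ((N + 1) * (M - (N + 1)))! * ((∏ i ∈ Finset.range N, (N - (i + 1))!) * N !) := by
              ring

/-- The constant `C_{MN} = (1/T!)·∏_{i=1}^N (M−i)!/(N−i)!` with `T = N(M−N)`
satisfies `0 < C_{MN} ≤ 1` for all integers `M > N ≥ 1`. -/
theorem CMN_pos_le_one (M N : ℕ) (hN : 1 ≤ N) (hMN : N < M) :
    0 < (1 / ((N * (M - N))! : ℝ)) *
        ∏ i ∈ Finset.range N, ((M - (i + 1))! : ℝ) / ((N - (i + 1))! : ℝ) ∧
      (1 / ((N * (M - N))! : ℝ)) *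
        ∏ i ∈ Finset.range N, ((M - (i + 1))! : ℝ) / ((N - (i + 1))! : ℝ) ≤ 1 := by
  have hT : (0 : ℝ) < ((N * (M - N))! : ℝ) := by
    exact_mod_cast Nat.factorial_pos _
  have hprodpos : (0 : ℝ) < ∏ i ∈ Finset.range N,
      ((M - (i + 1))! : ℝ) / ((N - (i + 1))! : ℝ) := by
    apply Finset.prod_pos
    intro i _
    apply _root_.div_pos
    · exact_mod_cast Nat.factorial_pos _
    · exact_mod_cast Nat.factorial_pos _
  constructor
  · exact mul_pos (by positivity) hprodpos
  · have hsplit : ∏ i ∈ Finset.range N, ((M - (i + 1))! : ℝ) / ((N - (i + 1))! : ℝ) =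
        (∏ i ∈ Finset.range N, ((M - (i + 1))! : ℝ)) /
          (∏ i ∈ Finset.range N, ((N - (i + 1))! : ℝ)) := by
      rw [Finset.prod_div_distrib]
    have hdenpos : (0 : ℝ) < ∏ i ∈ Finset.range N, ((N - (i + 1))! : ℝ) := by
      apply Finset.prod_pos; intro i _; exact_mod_cast Nat.factorial_pos _
    have hkey := CMN_key N hN M hMN
    have hkeyR : (∏ i ∈ Finset.range N, ((M - (i + 1))! : ℝ)) ≤
        ((N * (M - N))! : ℝ) * ∏ i ∈ Finset.range N, ((N - (i + 1))! : ℝ) := by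
      exact_mod_cast hkey
    have heq : (1 / ((N * (M - N))! : ℝ)) *
        ((∏ i ∈ Finset.range N, ((M - (i + 1))! : ℝ)) /
          (∏ i ∈ Finset.range N, ((N - (i + 1))! : ℝ))) =
        (∏ i ∈ Finset.range N, ((M - (i + 1))! : ℝ)) /
          (((N * (M - N))! : ℝ) * ∏ i ∈ Finset.range N, ((N - (i + 1))! : ℝ)) := by
      field_simp
    rw [hsplit, heq, div_le_one (mul_pos hT hdenpos)]
    exact hkeyR
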